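/- Let (Ω, Σ, μ) be a measure space, ρ ≥ 0 a μ-measurable weight, and (f_i)_{i∈I} an orthonormal family in the real Hilbert space L²_ρ(Ω). Let F be a finite subset of I, m_i, M_i, n_i, N_i ∈ ℝ for i ∈ F, and f, g ∈ L²_ρ(Ω) such that Σ_{i∈F} m_i f_i(s) ≤ f(s) ≤ Σ_{i∈F} M_i f_i(s) and Σ_{i∈F} n_i f_i(s) ≤ g(s) ≤ Σ_{i∈F} N_i f_i(s) for μ-almost every s ∈ Ω. Then |∫_Ω ρ f g dμ − Σ_{i∈F} (∫_Ω ρ f f_i dμ)(∫_Ω ρ g f_i dμ)| ≤ (1/4)(Σ_{i∈F} (M_i − m_i)²)^{1/2}(Σ_{i∈F} (N_i − n_i)²)^{1/2} − Σ_{i∈F} |(M_i + m_i)/2 − ∫_Ω ρ f f_i dμ| · |(N_i + n_i)/2 − ∫_Ω ρ g f_i dμ| ≤ (1/4)(Σ_{i∈F} (M_i − m_i)²)^{1/2}(Σ_{i∈F} (N_i − n_i)²)^{1/2}. -/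

import Mathlib

open Finset MeasureTheory

variable {Ω I : Type*} [MeasurableSpace Ω] [DecidableEq I]

namespace Stmt18Aux

variable {Ω I : Type*} [MeasurableSpace Ω] [DecidableEq I]
variable {μ : Measure Ω} {ρ : Ω → ℝ}

def Good (μ : Measure Ω) (ρ : Ω → ℝ) (u : Ω → ℝ) : Prop :=
  AEStronglyMeasurable u μ ∧ Integrable (fun s => ρ s * (u s * u s)) μ

lemma key_int (hρ : ∀ s, 0 ≤ ρ s) (hρm : Measurable ρ) {u v : Ω → ℝ}
    (hu : Good μ ρ u) (hv : Good μ ρ v) :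
    Integrable (fun s => ρ s * (u s * v s)) μ := by
  refine (hu.2.add hv.2).mono (hρm.aestronglyMeasurable.mul (hu.1.mul hv.1)) ?_
  filter_upwards with s
  have h := hρ s
  simp only [Real.norm_eq_abs, Pi.add_apply]
  have h1 : |ρ s * (u s * v s)| = ρ s * |u s| * |v s| := by
    rw [abs_mul, abs_of_nonneg h, abs_mul, mul_assoc]
  have h2 : ρ s * (u s * u s) + ρ s * (v s * v s)
      = |ρ s * (u s * u s) + ρ s * (v s * v s)| := by
    rw [abs_of_nonneg]
    have := mul_nonneg h (mul_self_nonneg (u s))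
    have := mul_nonneg h (mul_self_nonneg (v s))
    linarith
  rw [h1, ← h2]
  nlinarith [sq_nonneg (|u s| - |v s|), sq_abs (u s), sq_abs (v s),
    mul_nonneg h (sq_nonneg (|u s| - |v s|))]

lemma good_add (hρ : ∀ s, 0 ≤ ρ s) (hρm : Measurable ρ) {u v : Ω → ℝ}
    (hu : Good μ ρ u) (hv : Good μ ρ v) : Good μ ρ (fun s => u s + v s) := by
  refine ⟨hu.1.add hv.1, ?_⟩
  have i1 : Integrable (fun s => 2 * (ρ s * (u s * v s))) μ :=
    (key_int hρ hρm hu hv).const_mul 2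
  have i2 : Integrable (fun s => ρ s * (u s * u s) + 2 * (ρ s * (u s * v s))
      + ρ s * (v s * v s)) μ := (hu.2.add i1).add hv.2
  exact i2.congr (Filter.Eventually.of_forall fun s => by ring)

lemma good_smul {u : Ω → ℝ} (c : ℝ) (hu : Good μ ρ u) : Good μ ρ (fun s => c * u s) := by
  refine ⟨hu.1.const_mul c, ?_⟩
  exact (hu.2.const_mul (c * c)).congr (Filter.Eventually.of_forall fun s => by
    simp only; ring)

lemma good_zero : Good μ ρ (fun _ => (0 : ℝ)) := by
  refine ⟨aestronglyMeasurable_const, ?_⟩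
  exact (integrable_zero _ _ _).congr (Filter.Eventually.of_forall fun s => by simp)

lemma good_sub (hρ : ∀ s, 0 ≤ ρ s) (hρm : Measurable ρ) {u v : Ω → ℝ}
    (hu : Good μ ρ u) (hv : Good μ ρ v) : Good μ ρ (fun s => u s - v s) := by
  have h := good_add hρ hρm hu (good_smul (-1) hv)
  refine ⟨h.1.congr (Filter.Eventually.of_forall fun s => by simp only; ring), ?_⟩
  exact h.2.congr (Filter.Eventually.of_forall fun s => by simp only; ring)

lemma good_sum (hρ : ∀ s, 0 ≤ ρ s) (hρm : Measurable ρ) {h : I → Ω → ℝ}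
    (hh : ∀ i, Good μ ρ (h i)) (F : Finset I) (c : I → ℝ) :
    Good μ ρ (fun s => ∑ i ∈ F, c i * h i s) := by
  classical
  induction F using Finset.induction with
  | empty => simpa using (good_zero (μ := μ) (ρ := ρ))
  | @insert j G hj ih =>
    have := good_add hρ hρm (good_smul (c j) (hh j)) ih
    refine ⟨this.1.congr (Filter.Eventually.of_forall fun s => by
      simp [Finset.sum_insert hj]), ?_⟩
    exact this.2.congr (Filter.Eventually.of_forall fun s => by simp [Finset.sum_insert hj])

lemma int_comm (u v : Ω → ℝ) :
    ∫ s, ρ s * (u s * v s) ∂μ = ∫ s, ρ s * (v s * u s) ∂μ :=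
  integral_congr_ae (Filter.Eventually.of_forall fun s => by ring)

lemma int_mul_sum (hρ : ∀ s, 0 ≤ ρ s) (hρm : Measurable ρ) {u : Ω → ℝ} (hu : Good μ ρ u)
    {h : I → Ω → ℝ} (hh : ∀ i, Good μ ρ (h i)) (F : Finset I) (c : I → ℝ) :
    ∫ s, ρ s * (u s * ∑ i ∈ F, c i * h i s) ∂μ
      = ∑ i ∈ F, c i * ∫ s, ρ s * (u s * h i s) ∂μ := by
  have e : (fun s => ρ s * (u s * ∑ i ∈ F, c i * h i s))
      = fun s => ∑ i ∈ F, c i * (ρ s * (u s * h i s)) := by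
    funext s
    rw [Finset.mul_sum, Finset.mul_sum]
    exact Finset.sum_congr rfl fun i _ => by ring
  rw [e, integral_finset_sum _ fun i _ => (key_int hρ hρm hu (hh i)).const_mul _]
  exact Finset.sum_congr rfl fun i _ => integral_const_mul _ _

lemma int_expand (hρ : ∀ s, 0 ≤ ρ s) (hρm : Measurable ρ) {u v p q : Ω → ℝ}
    (hu : Good μ ρ u) (hv : Good μ ρ v) (hp : Good μ ρ p) (hq : Good μ ρ q) :
    ∫ s, ρ s * ((u s - p s) * (v s - q s)) ∂μ
      = ∫ s, ρ s * (u s * v s) ∂μ - ∫ s, ρ s * (u s * q s) ∂μ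
        - ∫ s, ρ s * (p s * v s) ∂μ + ∫ s, ρ s * (p s * q s) ∂μ := by
  have i1 : Integrable (fun s => ρ s * (u s * v s) - ρ s * (u s * q s)) μ :=
    (key_int hρ hρm hu hv).sub (key_int hρ hρm hu hq)
  have i2 : Integrable (fun s => ρ s * (u s * v s) - ρ s * (u s * q s)
      - ρ s * (p s * v s)) μ := i1.sub (key_int hρ hρm hp hv)
  have e : (fun s => ρ s * ((u s - p s) * (v s - q s)))
      = fun s => (ρ s * (u s * v s) - ρ s * (u s * q s) - ρ s * (p s * v s))
          + ρ s * (p s * q s) := funext fun s => by ring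
  rw [e, integral_add i2 (key_int hρ hρm hp hq), integral_sub i1 (key_int hρ hρm hp hv),
    integral_sub (key_int hρ hρm hu hv) (key_int hρ hρm hu hq)]

lemma cauchy (hρ : ∀ s, 0 ≤ ρ s) (hρm : Measurable ρ) {u v : Ω → ℝ}
    (hu : Good μ ρ u) (hv : Good μ ρ v) :
    (∫ s, ρ s * (u s * v s) ∂μ) ^ 2
      ≤ (∫ s, ρ s * (u s * u s) ∂μ) * ∫ s, ρ s * (v s * v s) ∂μ := by
  set A := ∫ s, ρ s * (u s * u s) ∂μ with hA
  set B := ∫ s, ρ s * (u s * v s) ∂μ with hB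
  set C := ∫ s, ρ s * (v s * v s) ∂μ with hC
  have key : ∀ t : ℝ, 0 ≤ C * (t * t) + (2 * B) * t + A := by
    intro t
    have i1 : Integrable (fun s => (t * t) * (ρ s * (v s * v s))) μ := hv.2.const_mul _
    have i2 : Integrable (fun s => (2 * t) * (ρ s * (u s * v s))) μ :=
      (key_int hρ hρm hu hv).const_mul _
    have i12 : Integrable (fun s => (t * t) * (ρ s * (v s * v s))
        + (2 * t) * (ρ s * (u s * v s))) μ := i1.add i2
    have e : (fun s => ρ s * ((u s + t * v s) * (u s + t * v s)))
        = fun s => ((t * t) * (ρ s * (v s * v s)) + (2 * t) * (ρ s * (u s * v s)))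
            + ρ s * (u s * u s) := funext fun s => by ring
    have h0 : 0 ≤ ∫ s, ρ s * ((u s + t * v s) * (u s + t * v s)) ∂μ :=
      integral_nonneg fun s => mul_nonneg (hρ s) (mul_self_nonneg _)
    rw [e, integral_add i12 hu.2, integral_add i1 i2, integral_const_mul,
      integral_const_mul] at h0
    rw [← hA, ← hB, ← hC] at h0
    nlinarith [h0]
  have hd := discrim_le_zero key
  rw [discrim] at hd
  nlinarith [hd]

set_option maxHeartbeats 1000000 in
lemma final_real (Z X Y S2 T2 C D SD : ℝ) (hX : 0 ≤ X) (hY : 0 ≤ Y)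
    (hXle : X ≤ S2 / 4 - C) (hYle : Y ≤ T2 / 4 - D) (hZ : Z ^ 2 ≤ X * Y)
    (hSD2 : SD ^ 2 ≤ C * D) (hSD : 0 ≤ SD) (hC : 0 ≤ C) (hD : 0 ≤ D) :
    |Z| ≤ (1 / 4) * Real.sqrt S2 * Real.sqrt T2 - SD := by
  have hS2 : 0 ≤ S2 := by linarith
  have hT2 : 0 ≤ T2 := by linarith
  set s := Real.sqrt S2 with hs
  set t := Real.sqrt T2 with ht
  have hs0 : 0 ≤ s := Real.sqrt_nonneg _
  have ht0 : 0 ≤ t := Real.sqrt_nonneg _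
  have hss : s * s = S2 := Real.mul_self_sqrt hS2
  have htt : t * t = T2 := Real.mul_self_sqrt hT2
  clear_value s t
  obtain ⟨x, hx0, hxx⟩ : ∃ x : ℝ, 0 ≤ x ∧ x * x = C :=
    ⟨Real.sqrt C, Real.sqrt_nonneg _, Real.mul_self_sqrt hC⟩
  obtain ⟨y, hy0, hyy⟩ : ∃ y : ℝ, 0 ≤ y ∧ y * y = D :=
    ⟨Real.sqrt D, Real.sqrt_nonneg _, Real.mul_self_sqrt hD⟩
  have hxs : x ≤ s / 2 := by
    by_contra hcon
    push_neg at hcon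
    have h1 := mul_self_lt_mul_self (by linarith : (0:ℝ) ≤ s / 2) hcon
    nlinarith
  have hyt : y ≤ t / 2 := by
    by_contra hcon
    push_neg at hcon
    have h1 := mul_self_lt_mul_self (by linarith : (0:ℝ) ≤ t / 2) hcon
    nlinarith
  have hSDxy : SD ≤ x * y := by
    by_contra hcon
    push_neg at hcon
    have h1 := mul_self_lt_mul_self (mul_nonneg hx0 hy0) hcon
    nlinarith
  have hR0 : 0 ≤ s * t / 4 - x * y := by
    have h1 := mul_le_mul hxs hyt hy0 (by linarith : (0:ℝ) ≤ s / 2)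
    nlinarith
  have e1 : X * Y ≤ (s * s / 4 - x * x) * (t * t / 4 - y * y) := by
    rw [hss, htt, hxx, hyy]
    exact mul_le_mul hXle hYle hY (by linarith)
  have e2 : (s * s / 4 - x * x) * (t * t / 4 - y * y) ≤ (s * t / 4 - x * y) ^ 2 := by
    nlinarith [sq_nonneg (s * y - t * x)]
  have e3 : (s * t / 4 - x * y) ^ 2 ≤ (s * t / 4 - SD) ^ 2 := by
    nlinarith [mul_nonneg (by linarith : (0:ℝ) ≤ (s * t / 4 - SD) - (s * t / 4 - x * y))
      (by linarith : (0:ℝ) ≤ (s * t / 4 - SD) + (s * t / 4 - x * y))]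
  have hRHS : 0 ≤ s * t / 4 - SD := by linarith
  have hZ2 : Z ^ 2 ≤ (s * t / 4 - SD) ^ 2 := by linarith
  have := Real.sqrt_le_sqrt hZ2
  rw [Real.sqrt_sq_eq_abs, Real.sqrt_sq hRHS] at this
  linarith [this, abs_nonneg Z]

end Stmt18Aux

namespace Stmt18Aux
variable {Ω I : Type*} [MeasurableSpace Ω] [DecidableEq I]
variable {μ : Measure Ω} {ρ : Ω → ℝ}

lemma int_sum_h (hρ : ∀ s, 0 ≤ ρ s) (hρm : Measurable ρ) {h : I → Ω → ℝ}
    (hGfi : ∀ i, Good μ ρ (h i))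
    (horth : ∀ i j, ∫ s, ρ s * (h i s * h j s) ∂μ = if i = j then 1 else 0)
    (F : Finset I) (c : I → ℝ) {j : I} (hj : j ∈ F) :
    ∫ s, ρ s * (h j s * ∑ i ∈ F, c i * h i s) ∂μ = c j := by
  rw [int_mul_sum hρ hρm (hGfi j) hGfi F c]
  simp only [horth]
  simp [Finset.sum_ite_eq, hj]

lemma int_sum_sum (hρ : ∀ s, 0 ≤ ρ s) (hρm : Measurable ρ) {h : I → Ω → ℝ}
    (hGfi : ∀ i, Good μ ρ (h i))
    (horth : ∀ i j, ∫ s, ρ s * (h i s * h j s) ∂μ = if i = j then 1 else 0)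
    (F : Finset I) (c e : I → ℝ) :
    ∫ s, ρ s * ((∑ i ∈ F, c i * h i s) * ∑ i ∈ F, e i * h i s) ∂μ
      = ∑ i ∈ F, c i * e i := by
  rw [int_mul_sum hρ hρm (good_sum hρ hρm hGfi F c) hGfi F e]
  refine Finset.sum_congr rfl fun j hj => ?_
  rw [int_comm, int_sum_h hρ hρm hGfi horth F c hj]
  exact mul_comm _ _

lemma proj_id (hρ : ∀ s, 0 ≤ ρ s) (hρm : Measurable ρ) {h : I → Ω → ℝ}
    (hGfi : ∀ i, Good μ ρ (h i))
    (horth : ∀ i j, ∫ s, ρ s * (h i s * h j s) ∂μ = if i = j then 1 else 0)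
    (F : Finset I) {u v : Ω → ℝ} (hu : Good μ ρ u) (hv : Good μ ρ v) :
    ∫ s, ρ s * ((u s - ∑ i ∈ F, (∫ t, ρ t * (u t * h i t) ∂μ) * h i s)
        * (v s - ∑ i ∈ F, (∫ t, ρ t * (v t * h i t) ∂μ) * h i s)) ∂μ
      = (∫ s, ρ s * (u s * v s) ∂μ)
        - ∑ i ∈ F, (∫ t, ρ t * (u t * h i t) ∂μ) * (∫ t, ρ t * (v t * h i t) ∂μ) := by
  set a : I → ℝ := fun i => ∫ t, ρ t * (u t * h i t) ∂μ with ha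
  set b : I → ℝ := fun i => ∫ t, ρ t * (v t * h i t) ∂μ with hb
  show ∫ s, ρ s * ((u s - ∑ i ∈ F, a i * h i s) * (v s - ∑ i ∈ F, b i * h i s)) ∂μ
      = (∫ s, ρ s * (u s * v s) ∂μ) - ∑ i ∈ F, a i * b i
  have e1 : ∫ s, ρ s * (u s * ∑ i ∈ F, b i * h i s) ∂μ = ∑ i ∈ F, b i * a i := by
    rw [int_mul_sum hρ hρm hu hGfi F b]
  have e2 : ∫ s, ρ s * ((∑ i ∈ F, a i * h i s) * v s) ∂μ = ∑ i ∈ F, a i * b i := by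
    rw [int_comm, int_mul_sum hρ hρm hv hGfi F a]
  have e3 : ∫ s, ρ s * ((∑ i ∈ F, a i * h i s) * ∑ i ∈ F, b i * h i s) ∂μ
      = ∑ i ∈ F, a i * b i := int_sum_sum hρ hρm hGfi horth F a b
  have e4 : ∑ i ∈ F, b i * a i = ∑ i ∈ F, a i * b i :=
    Finset.sum_congr rfl fun i _ => mul_comm _ _
  rw [int_expand hρ hρm hu hv (good_sum hρ hρm hGfi F a) (good_sum hρ hρm hGfi F b),
    e1, e2, e3, e4]
  ring

lemma bound_est (hρ : ∀ s, 0 ≤ ρ s) (hρm : Measurable ρ) {h : I → Ω → ℝ}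
    (hGfi : ∀ i, Good μ ρ (h i))
    (horth : ∀ i j, ∫ s, ρ s * (h i s * h j s) ∂μ = if i = j then 1 else 0)
    (F : Finset I) {u : Ω → ℝ} (hu : Good μ ρ u) (m M : I → ℝ)
    (hbound : ∀ᵐ s ∂μ, (∑ i ∈ F, m i * h i s) ≤ u s ∧ u s ≤ ∑ i ∈ F, M i * h i s) :
    ∫ s, ρ s * ((u s - ∑ i ∈ F, (∫ t, ρ t * (u t * h i t) ∂μ) * h i s)
        * (u s - ∑ i ∈ F, (∫ t, ρ t * (u t * h i t) ∂μ) * h i s)) ∂μ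
      ≤ (∑ i ∈ F, (M i - m i) ^ 2) / 4
        - ∑ i ∈ F, ((M i + m i) / 2 - ∫ t, ρ t * (u t * h i t) ∂μ) ^ 2 := by
  set a : I → ℝ := fun i => ∫ t, ρ t * (u t * h i t) ∂μ with ha
  show ∫ s, ρ s * ((u s - ∑ i ∈ F, a i * h i s) * (u s - ∑ i ∈ F, a i * h i s)) ∂μ
      ≤ (∑ i ∈ F, (M i - m i) ^ 2) / 4 - ∑ i ∈ F, ((M i + m i) / 2 - a i) ^ 2
  have hXeq : ∫ s, ρ s * ((u s - ∑ i ∈ F, a i * h i s) * (u s - ∑ i ∈ F, a i * h i s)) ∂μ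
      = (∫ s, ρ s * (u s * u s) ∂μ) - ∑ i ∈ F, a i * a i :=
    proj_id hρ hρm hGfi horth F hu hu
  have hGM : Good μ ρ (fun s => ∑ i ∈ F, M i * h i s) := good_sum hρ hρm hGfi F M
  have hGm : Good μ ρ (fun s => ∑ i ∈ F, m i * h i s) := good_sum hρ hρm hGfi F m
  have hD : 0 ≤ ∫ s, ρ s * (((∑ i ∈ F, M i * h i s) - u s) * (u s - ∑ i ∈ F, m i * h i s)) ∂μ := by
    refine integral_nonneg_of_ae ?_
    filter_upwards [hbound] with s hs
    exact mul_nonneg (hρ s) (mul_nonneg (by linarith [hs.2]) (by linarith [hs.1]))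
  have eMu : ∫ s, ρ s * ((∑ i ∈ F, M i * h i s) * u s) ∂μ = ∑ i ∈ F, M i * a i := by
    rw [int_comm, int_mul_sum hρ hρm hu hGfi F M]
  have emu : ∫ s, ρ s * (u s * ∑ i ∈ F, m i * h i s) ∂μ = ∑ i ∈ F, m i * a i := by
    rw [int_mul_sum hρ hρm hu hGfi F m]
  have eMm : ∫ s, ρ s * ((∑ i ∈ F, M i * h i s) * ∑ i ∈ F, m i * h i s) ∂μ
      = ∑ i ∈ F, M i * m i := int_sum_sum hρ hρm hGfi horth F M m
  rw [int_expand hρ hρm hGM hu hu hGm, eMu, eMm, emu] at hD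
  have key : (∑ i ∈ F, (M i - m i) ^ 2) / 4 - ∑ i ∈ F, ((M i + m i) / 2 - a i) ^ 2
      = ∑ i ∈ F, M i * a i + ∑ i ∈ F, m i * a i - ∑ i ∈ F, M i * m i
        - ∑ i ∈ F, a i * a i := by
    rw [Finset.sum_div, ← Finset.sum_add_distrib, ← Finset.sum_sub_distrib,
      ← Finset.sum_sub_distrib, ← Finset.sum_sub_distrib]
    exact Finset.sum_congr rfl fun i _ => by ring
  linarith [hD, hXeq, key]

end Stmt18Aux

open Stmt18Aux in
theorem stmt18 (μ : Measure Ω) (ρ : Ω → ℝ) (hρ : ∀ s, 0 ≤ ρ s) (hρm : Measurable ρ)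
    (fi : I → Ω → ℝ) (hfim : ∀ i, AEStronglyMeasurable (fi i) μ)
    (hfi2 : ∀ i, Integrable (fun s => ρ s * fi i s ^ 2) μ)
    (horth : ∀ i j, ∫ s, ρ s * (fi i s * fi j s) ∂μ = if i = j then 1 else 0)
    (F : Finset I) (m M n N : I → ℝ)
    (f g : Ω → ℝ) (hfm : AEStronglyMeasurable f μ) (hgm : AEStronglyMeasurable g μ)
    (hf2 : Integrable (fun s => ρ s * f s ^ 2) μ)
    (hg2 : Integrable (fun s => ρ s * g s ^ 2) μ)
    (hfbound : ∀ᵐ s ∂μ, (∑ i ∈ F, m i * fi i s) ≤ f s ∧ f s ≤ ∑ i ∈ F, M i * fi i s)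
    (hgbound : ∀ᵐ s ∂μ, (∑ i ∈ F, n i * fi i s) ≤ g s ∧ g s ≤ ∑ i ∈ F, N i * fi i s) :
    |(∫ s, ρ s * (f s * g s) ∂μ) -
        ∑ i ∈ F, (∫ s, ρ s * (f s * fi i s) ∂μ) * (∫ s, ρ s * (g s * fi i s) ∂μ)| ≤
      (1 / 4) * Real.sqrt (∑ i ∈ F, (M i - m i) ^ 2) *
          Real.sqrt (∑ i ∈ F, (N i - n i) ^ 2) -
        ∑ i ∈ F, |(M i + m i) / 2 - ∫ s, ρ s * (f s * fi i s) ∂μ| *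
          |(N i + n i) / 2 - ∫ s, ρ s * (g s * fi i s) ∂μ| ∧
    (1 / 4) * Real.sqrt (∑ i ∈ F, (M i - m i) ^ 2) *
          Real.sqrt (∑ i ∈ F, (N i - n i) ^ 2) -
        ∑ i ∈ F, |(M i + m i) / 2 - ∫ s, ρ s * (f s * fi i s) ∂μ| *
          |(N i + n i) / 2 - ∫ s, ρ s * (g s * fi i s) ∂μ| ≤
      (1 / 4) * Real.sqrt (∑ i ∈ F, (M i - m i) ^ 2) *
          Real.sqrt (∑ i ∈ F, (N i - n i) ^ 2) := by
  classical
  have hGfi : ∀ i, Good μ ρ (fi i) := fun i =>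
    ⟨hfim i, (hfi2 i).congr (Filter.Eventually.of_forall fun s => by simp only; ring)⟩
  have hGf : Good μ ρ f := ⟨hfm, hf2.congr (Filter.Eventually.of_forall fun s => by simp only; ring)⟩
  have hGg : Good μ ρ g := ⟨hgm, hg2.congr (Filter.Eventually.of_forall fun s => by simp only; ring)⟩
  have hGpf : Good μ ρ (fun s => f s - ∑ i ∈ F, (∫ t, ρ t * (f t * fi i t) ∂μ) * fi i s) :=
    good_sub hρ hρm hGf (good_sum hρ hρm hGfi F _)
  have hGpg : Good μ ρ (fun s => g s - ∑ i ∈ F, (∫ t, ρ t * (g t * fi i t) ∂μ) * fi i s) :=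
    good_sub hρ hρm hGg (good_sum hρ hρm hGfi F _)
  have hcs := cauchy hρ hρm hGpf hGpg
  have hZeq := proj_id hρ hρm hGfi horth F hGf hGg
  rw [hZeq] at hcs
  have hXle := bound_est hρ hρm hGfi horth F hGf m M hfbound
  have hYle := bound_est hρ hρm hGfi horth F hGg n N hgbound
  have hX0 : 0 ≤ ∫ s, ρ s * ((f s - ∑ i ∈ F, (∫ t, ρ t * (f t * fi i t) ∂μ) * fi i s)
      * (f s - ∑ i ∈ F, (∫ t, ρ t * (f t * fi i t) ∂μ) * fi i s)) ∂μ :=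
    integral_nonneg fun s => mul_nonneg (hρ s) (mul_self_nonneg _)
  have hY0 : 0 ≤ ∫ s, ρ s * ((g s - ∑ i ∈ F, (∫ t, ρ t * (g t * fi i t) ∂μ) * fi i s)
      * (g s - ∑ i ∈ F, (∫ t, ρ t * (g t * fi i t) ∂μ) * fi i s)) ∂μ :=
    integral_nonneg fun s => mul_nonneg (hρ s) (mul_self_nonneg _)
  have hC : 0 ≤ ∑ i ∈ F, ((M i + m i) / 2 - ∫ s, ρ s * (f s * fi i s) ∂μ) ^ 2 :=
    Finset.sum_nonneg fun i _ => sq_nonneg _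
  have hD0 : 0 ≤ ∑ i ∈ F, ((N i + n i) / 2 - ∫ s, ρ s * (g s * fi i s) ∂μ) ^ 2 :=
    Finset.sum_nonneg fun i _ => sq_nonneg _
  have hSD : 0 ≤ ∑ i ∈ F, |(M i + m i) / 2 - ∫ s, ρ s * (f s * fi i s) ∂μ| *
      |(N i + n i) / 2 - ∫ s, ρ s * (g s * fi i s) ∂μ| :=
    Finset.sum_nonneg fun i _ => mul_nonneg (abs_nonneg _) (abs_nonneg _)
  have hSD2 := Finset.sum_mul_sq_le_sq_mul_sq F
    (fun i => |(M i + m i) / 2 - ∫ s, ρ s * (f s * fi i s) ∂μ|)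
    (fun i => |(N i + n i) / 2 - ∫ s, ρ s * (g s * fi i s) ∂μ|)
  simp only [sq_abs] at hSD2
  refine ⟨?_, sub_le_self _ hSD⟩
  exact final_real _ _ _ _ _ _ _ _ hX0 hY0 hXle hYle hcs hSD2 hSD hC hD0
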